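/- Let d ≥ 1, δ ∈ (0,1), T₀ > 0 and C_Z > 0. Then there exist C > 0 and ε₀ ∈ (0,1] such that for every ε ∈ (0,ε₀], every continuous Ẑ : [0,T₀] → ℓ¹_{1−δ/2}(ℤ^d) with sup_{T∈[0,T₀]} ‖Ẑ(T)‖_{ℓ¹_{1−δ/2}} ≤ C_Z, and every t ∈ [0, T₀/ε²]: Σ_{K∈ℤ^d, ε|K| ≤ 1/10} |∫₀^t e^{λ(e₁+εK)(t−τ)} (−4ε⁴K₁³ − ε⁵K₁⁴) Ẑ(K, ε²τ) dτ| ≤ C ε^{2 − 3δ/2}. -/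

import Mathlib

/-- The weight `(1 + |K|²)^{r/2}` on the lattice `ℤ^d`. -/
noncomputable def wt (d : ℕ) (r : ℝ) (K : Fin d → ℤ) : ℝ :=
  (1 + ∑ i, ((K i : ℝ)) ^ 2) ^ (r / 2)

/-- Continuity of `T ↦ Z(T)` on `[0,T₀]` with respect to the `ℓ¹_r` norm. -/
def NormContOn (d : ℕ) (r T₀ : ℝ) (B : ℝ → (Fin d → ℤ) → ℂ) : Prop :=
  ∀ T ∈ Set.Icc (0 : ℝ) T₀, ∀ η > 0, ∃ ν > 0, ∀ T' ∈ Set.Icc (0 : ℝ) T₀,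
    |T' - T| < ν → ∑' K : Fin d → ℤ, ‖B T' K - B T K‖ * wt d r K < η


lemma aux_rpow_le_exp (v p : ℝ) (hv : 0 < v) (hp1 : 1 ≤ p) (hp2 : p ≤ 5/4) :
    v ^ p ≤ Real.exp (3 * v) := by
  rcases le_total v 1 with hv1 | hv1
  · have h1 : v ^ p ≤ v ^ (1:ℝ) := Real.rpow_le_rpow_of_exponent_ge hv hv1 hp1
    rw [Real.rpow_one] at h1
    have h2 : (1:ℝ) ≤ Real.exp (3*v) := Real.one_le_exp (by linarith)
    linarith
  · have h1 : v ^ p ≤ v ^ ((3:ℕ):ℝ) := Real.rpow_le_rpow_of_exponent_le hv1 (by push_cast; linarith)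
    rw [Real.rpow_natCast] at h1
    have h2 : v ^ 3 ≤ Real.exp (3*v) := by
      have he : v + 1 ≤ Real.exp v := Real.add_one_le_exp v
      have h3 : Real.exp (3*v) = Real.exp v * Real.exp v * Real.exp v := by
        rw [show 3*v = v + v + v by ring, Real.exp_add, Real.exp_add]
      rw [h3]
      have h4 : (v+1)^3 ≤ Real.exp v ^ 3 := pow_le_pow_left₀ (by linarith) he 3
      nlinarith [h4, Real.exp_pos v]
    linarith

lemma aux_core2 (x s p : ℝ) (hx0 : 0 < x) (hx : x ≤ 1/10) (hs : 0 ≤ s)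
    (hp1 : 1 ≤ p) (hp2 : p ≤ 5/4) :
    x ^ (2*p) * Real.exp (-(3 * x^2 * s)) ≤ 2 * (1+s) ^ (-p) := by
  have h1s : (0:ℝ) < 1 + s := by linarith
  have hv0 : 0 < x^2 * (1+s) := by positivity
  have key : (x^2 * (1+s)) ^ p ≤ 2 * Real.exp (3 * x^2 * s) := by
    have h1 : (x^2 * (1+s)) ^ p ≤ Real.exp (3*(x^2*(1+s))) := aux_rpow_le_exp _ p hv0 hp1 hp2
    have h2 : Real.exp (3*(x^2*(1+s))) = Real.exp (3*x^2) * Real.exp (3*x^2*s) := by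
      rw [← Real.exp_add]; ring_nf
    have h3 : Real.exp (3*x^2) ≤ 2 := by
      have hneg : 1 - 3*x^2 ≤ Real.exp (-(3*x^2)) := by
        have := Real.add_one_le_exp (-(3*x^2)); linarith
      have hx2 : x^2 ≤ 1/100 := by nlinarith
      have hpos : 0 < Real.exp (-(3*x^2)) := Real.exp_pos _
      have h4 : Real.exp (3*x^2) = 1 / Real.exp (-(3*x^2)) := by
        rw [Real.exp_neg]; field_simp
      rw [h4, div_le_iff₀ hpos]
      nlinarith
    calc (x^2 * (1+s)) ^ p ≤ Real.exp (3*x^2) * Real.exp (3*x^2*s) := by rw [← h2]; exact h1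
      _ ≤ 2 * Real.exp (3*x^2*s) := by nlinarith [Real.exp_pos (3*x^2*s), Real.exp_pos (3*x^2)]
  have hvps : (x^2 * (1+s)) ^ p = x^(2*p) * (1+s)^p := by
    rw [Real.mul_rpow (by positivity) h1s.le]
    congr 1
    rw [← Real.rpow_natCast x 2, ← Real.rpow_mul hx0.le]
    norm_num
  rw [Real.rpow_neg h1s.le, Real.exp_neg, ← div_eq_mul_inv, ← div_eq_mul_inv,
    div_le_div_iff₀ (Real.exp_pos _) (Real.rpow_pos_of_pos h1s p)]
  rw [hvps] at key
  linarith

lemma aux_Ebound (δ ε c S w s : ℝ) (hδ0 : 0 < δ) (hδ1 : δ < 1) (hε : 0 < ε)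
    (hS : 0 ≤ S) (hc : c = 0 ∨ 1 ≤ |c|) (hεc : ε * |c| ≤ 1/10) (hs : 0 ≤ s)
    (hw : 1 ≤ w) (hw2 : |c| ^ (1 - δ/2) ≤ w) :
    Real.exp ((-(1-(1+ε*c)^2)^2 - 4*S) * s) * |(-4*ε^4*c^3 - ε^5*c^4)| ≤
      10 * ε ^ (2 - δ/2) * ((1+s) ^ (-(1+δ/4)) * w) := by
  rcases hc with hc | hc
  · subst hc
    simp only [abs_zero, zero_pow, mul_zero]
    norm_num
    positivity
  · set k := |c| with hk
    have hk0 : (0:ℝ) < k := by rw [hk]; positivity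
    have hk1 : 1 ≤ k := hc
    have hx0 : 0 < ε * k := by positivity
    have habs : |ε*c| ≤ 1/10 := by rwa [abs_mul, abs_of_pos hε]
    have hεc1 : -(1/10) ≤ ε*c := by have := neg_abs_le (ε*c); linarith
    have hεc2 : ε*c ≤ 1/10 := le_trans (le_abs_self _) habs
    -- exponential bound
    have hlam : (-(1-(1+ε*c)^2)^2 - 4*S) * s ≤ -(3 * (ε*k)^2 * s) := by
      have hkc : (ε*k)^2 = (ε*c)^2 := by rw [hk]; rw [mul_pow, mul_pow, sq_abs]
      rw [hkc]
      have h1 : 0 ≤ (ε*c)^2 * (1 + 4*(ε*c) + (ε*c)^2) :=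
        mul_nonneg (sq_nonneg _) (by nlinarith [sq_nonneg (ε*c), hεc1])
      have h2 : -(1-(1+ε*c)^2)^2 - 4*S ≤ -(3 * (ε*c)^2) := by nlinarith [hεc1, hεc2]
      calc (-(1-(1+ε*c)^2)^2 - 4*S) * s ≤ (-(3 * (ε*c)^2)) * s :=
            mul_le_mul_of_nonneg_right h2 hs
        _ = -(3 * (ε*c)^2 * s) := by ring
    have hexp : Real.exp ((-(1-(1+ε*c)^2)^2 - 4*S) * s) ≤ Real.exp (-(3 * (ε*k)^2 * s)) :=
      Real.exp_le_exp.mpr hlam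
    -- multiplier bound
    have hc3b : c^3 ≤ k^3 := by rw [hk, ← abs_pow]; exact le_abs_self _
    have hc3a : -(k^3) ≤ c^3 := by rw [hk, ← abs_pow]; exact neg_abs_le _
    have hc4 : c^4 = k^4 := by rw [hk, ← abs_pow, abs_of_nonneg (by positivity)]
    have h2 : ε * k * (ε^4 * k^3) ≤ (1/10) * (ε^4 * k^3) :=
      mul_le_mul_of_nonneg_right hεc (by positivity)
    have hm : |(-4*ε^4*c^3 - ε^5*c^4)| ≤ 5 * ε^4 * k^3 := by
      rw [abs_le]
      constructor
      · nlinarith [pow_pos hε 4, pow_pos hk0 3,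
          mul_nonneg (pow_pos hε 5).le (pow_nonneg hk0.le 4),
          mul_le_mul_of_nonneg_left hc3b (by positivity : (0:ℝ) ≤ 4*ε^4)]
      · nlinarith [pow_pos hε 4, pow_pos hk0 3,
          mul_nonneg (pow_pos hε 5).le (pow_nonneg hk0.le 4),
          mul_le_mul_of_nonneg_left hc3a (by positivity : (0:ℝ) ≤ 4*ε^4)]
    -- exponent identity
    have hid : ε^4 * k^3 = ε^(2-δ/2) * k^(1-δ/2) * (ε*k)^(2*(1+δ/4)) := by
      rw [Real.mul_rpow hε.le hk0.le]
      have e1 : ε^(2-δ/2) * (ε^(2*(1+δ/4))) = ε^(4:ℕ) := by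
        rw [← Real.rpow_natCast ε 4, ← Real.rpow_add hε]
        congr 1
        push_cast
        ring
      have e2 : k^(1-δ/2) * (k^(2*(1+δ/4))) = k^(3:ℕ) := by
        rw [← Real.rpow_natCast k 3, ← Real.rpow_add hk0]
        congr 1
        push_cast
        ring
      calc ε^4 * k^3 = (ε^(2-δ/2) * ε^(2*(1+δ/4))) * (k^(1-δ/2) * k^(2*(1+δ/4))) := by
            rw [e1, e2]
        _ = ε^(2-δ/2) * k^(1-δ/2) * (ε^(2*(1+δ/4)) * k^(2*(1+δ/4))) := by ring
    -- core inequality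
    have hcore : (ε*k) ^ (2*(1+δ/4)) * Real.exp (-(3 * (ε*k)^2 * s)) ≤ 2 * (1+s)^(-(1+δ/4)) := by
      refine aux_core2 (ε*k) s (1+δ/4) hx0 ?_ hs (by linarith) (by linarith)
      calc ε * k = ε * |c| := by rw [hk]
        _ ≤ 1/10 := hεc
    have hwk : k^(1-δ/2) ≤ w := hw2
    have hrp : (0:ℝ) ≤ (1+s)^(-(1+δ/4)) := Real.rpow_nonneg (by linarith) _
    have hεq : (0:ℝ) < ε^(2-δ/2) := Real.rpow_pos_of_pos hε _
    have hkq : (0:ℝ) < k^(1-δ/2) := Real.rpow_pos_of_pos hk0 _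
    calc Real.exp ((-(1-(1+ε*c)^2)^2 - 4*S) * s) * |(-4*ε^4*c^3 - ε^5*c^4)|
        ≤ Real.exp (-(3 * (ε*k)^2 * s)) * (5 * ε^4 * k^3) := by
          apply mul_le_mul hexp hm (abs_nonneg _) (Real.exp_pos _).le
      _ = 5 * (ε^(2-δ/2) * k^(1-δ/2)) * ((ε*k)^(2*(1+δ/4)) * Real.exp (-(3 * (ε*k)^2 * s))) := by
          rw [show Real.exp (-(3 * (ε*k)^2 * s)) * (5 * ε^4 * k^3)
              = 5 * (ε^4 * k^3) * Real.exp (-(3 * (ε*k)^2 * s)) from by ring, hid]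
          ring
      _ ≤ 5 * (ε^(2-δ/2) * k^(1-δ/2)) * (2 * (1+s)^(-(1+δ/4))) := by
          apply mul_le_mul_of_nonneg_left hcore (by positivity)
      _ = 10 * ε^(2-δ/2) * ((1+s)^(-(1+δ/4)) * k^(1-δ/2)) := by ring
      _ ≤ 10 * ε^(2-δ/2) * ((1+s)^(-(1+δ/4)) * w) := by
          apply mul_le_mul_of_nonneg_left (mul_le_mul_of_nonneg_left hwk hrp) (by positivity)

lemma aux_J (δ t : ℝ) (hδ0 : 0 < δ) (hδ1 : δ < 1) (ht : 0 ≤ t) :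
    ∫ τ in (0:ℝ)..t, (1+(t-τ))^(-(1+δ/4)) ≤ 4/δ := by
  have h1 : ∫ τ in (0:ℝ)..t, (1+(t-τ))^(-(1+δ/4))
      = ∫ u in (0:ℝ)..t, (1+u)^(-(1+δ/4)) := by
    rw [intervalIntegral.integral_comp_sub_left (fun u => (1+u)^(-(1+δ/4))) t]
    norm_num
  have h2 : ∫ u in (0:ℝ)..t, (1+u)^(-(1+δ/4))
      = ∫ u in (1:ℝ)..(1+t), u^(-(1+δ/4)) := by
    rw [intervalIntegral.integral_comp_add_left (fun u => u^(-(1+δ/4))) 1]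
    norm_num
  have h3 : ∫ u in (1:ℝ)..(1+t), u^(-(1+δ/4))
      = ((1+t) ^ (-(1+δ/4)+1) - 1 ^ (-(1+δ/4)+1)) / (-(1+δ/4)+1) := by
    apply integral_rpow
    refine Or.inr ⟨by intro h; nlinarith [h], ?_⟩
    rw [Set.uIcc_of_le (by linarith : (1:ℝ) ≤ 1+t)]
    intro h
    have := h.1
    linarith
  rw [h1, h2, h3, Real.one_rpow]
  have hA : (0:ℝ) ≤ (1+t) ^ (-(1+δ/4)+1) := Real.rpow_nonneg (by linarith) _
  rw [div_le_iff_of_neg (by linarith : -(1+δ/4)+1 < 0)]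
  have : 4/δ * (-(1+δ/4)+1) = -1 := by field_simp; ring
  rw [this]
  linarith

lemma aux_one_le_wt (d : ℕ) (r : ℝ) (hr : 0 ≤ r) (K : Fin d → ℤ) : 1 ≤ wt d r K := by
  unfold wt
  have hS : (0:ℝ) ≤ ∑ i, ((K i : ℝ)) ^ 2 := by positivity
  calc (1:ℝ) = 1 ^ (r/2) := (Real.one_rpow _).symm
    _ ≤ _ := Real.rpow_le_rpow zero_le_one (by linarith) (by linarith)

lemma aux_wt_nonneg (d : ℕ) (r : ℝ) (hr : 0 ≤ r) (K : Fin d → ℤ) : 0 ≤ wt d r K :=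
  le_trans zero_le_one (aux_one_le_wt d r hr K)

lemma aux_contOn (d : ℕ) (r T₀ : ℝ) (hr : 0 ≤ r) (Z : ℝ → (Fin d → ℤ) → ℂ)
    (hZc : NormContOn d r T₀ Z)
    (hZs : ∀ T ∈ Set.Icc (0:ℝ) T₀, Summable fun K => ‖Z T K‖ * wt d r K)
    (K : Fin d → ℤ) :
    ContinuousOn (fun T => Z T K) (Set.Icc (0:ℝ) T₀) := by
  intro T hT
  rw [Metric.continuousWithinAt_iff]
  intro η hη
  obtain ⟨ν, hν0, hν⟩ := hZc T hT η hη
  refine ⟨ν, hν0, fun T' hT' hdist => ?_⟩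
  have hdiff : Summable fun K => ‖Z T' K - Z T K‖ * wt d r K := by
    refine Summable.of_nonneg_of_le
      (fun K => mul_nonneg (norm_nonneg _) (aux_wt_nonneg d r hr K)) (fun K => ?_)
      ((hZs T' hT').add (hZs T hT))
    have h1 : ‖Z T' K - Z T K‖ ≤ ‖Z T' K‖ + ‖Z T K‖ := norm_sub_le _ _
    have h2 : (0:ℝ) ≤ wt d r K := aux_wt_nonneg d r hr K
    nlinarith
  have h3 : ‖Z T' K - Z T K‖ * wt d r K ≤ ∑' K, ‖Z T' K - Z T K‖ * wt d r K :=
    Summable.le_tsum hdiff K (fun b _ => mul_nonneg (norm_nonneg _) (aux_wt_nonneg d r hr b))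
  have h4 : ‖Z T' K - Z T K‖ ≤ ‖Z T' K - Z T K‖ * wt d r K :=
    le_mul_of_one_le_right (norm_nonneg _) (aux_one_le_wt d r hr K)
  have h5 := hν T' hT' (by rwa [Real.dist_eq] at hdist)
  rw [dist_eq_norm]
  linarith

lemma aux_perK (δ ε c S w t : ℝ) (φ : ℝ → ℂ) (hδ0 : 0 < δ) (hδ1 : δ < 1) (hε : 0 < ε)
    (hS : 0 ≤ S) (hc : c = 0 ∨ 1 ≤ |c|) (hεc : ε * |c| ≤ 1/10) (ht0 : 0 ≤ t)
    (hw : 1 ≤ w) (hw2 : |c| ^ (1 - δ/2) ≤ w)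
    (hφ : ContinuousOn φ (Set.Icc 0 t)) :
    ‖∫ τ in (0:ℝ)..t,
        (Real.exp ((-(1-(1+ε*c)^2)^2 - 4*S) * (t-τ)) * (-4*ε^4*c^3 - ε^5*c^4)) • φ τ‖
      ≤ 10 * ε^(2-δ/2) * ∫ τ in (0:ℝ)..t, (1+(t-τ))^(-(1+δ/4)) * (‖φ τ‖ * w) := by
  have hw0 : (0:ℝ) ≤ w := le_trans zero_le_one hw
  have hint_f : IntervalIntegrable
      (fun τ => (Real.exp ((-(1-(1+ε*c)^2)^2 - 4*S) * (t-τ)) * (-4*ε^4*c^3 - ε^5*c^4)) • φ τ)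
      MeasureTheory.volume 0 t := by
    apply ContinuousOn.intervalIntegrable
    rw [Set.uIcc_of_le ht0]
    exact (Continuous.continuousOn (by fun_prop : Continuous fun τ : ℝ => Real.exp ((-(1-(1+ε*c)^2)^2 - 4*S) * (t-τ)) * (-4*ε^4*c^3 - ε^5*c^4))).smul hφ
  have hcont_rpow : ContinuousOn (fun τ : ℝ => (1+(t-τ))^(-(1+δ/4))) (Set.Icc 0 t) := by
    apply ContinuousOn.rpow_const (by fun_prop)
    intro τ hτ
    left
    have := hτ.2
    intro h0
    nlinarith [hτ.2]
  have hint_g : IntervalIntegrable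
      (fun τ => 10 * ε^(2-δ/2) * ((1+(t-τ))^(-(1+δ/4)) * (‖φ τ‖ * w)))
      MeasureTheory.volume 0 t := by
    apply ContinuousOn.intervalIntegrable
    rw [Set.uIcc_of_le ht0]
    exact continuousOn_const.mul (hcont_rpow.mul (hφ.norm.mul continuousOn_const))
  calc ‖∫ τ in (0:ℝ)..t,
        (Real.exp ((-(1-(1+ε*c)^2)^2 - 4*S) * (t-τ)) * (-4*ε^4*c^3 - ε^5*c^4)) • φ τ‖
      ≤ ∫ τ in (0:ℝ)..t,
        ‖(Real.exp ((-(1-(1+ε*c)^2)^2 - 4*S) * (t-τ)) * (-4*ε^4*c^3 - ε^5*c^4)) • φ τ‖ :=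
        intervalIntegral.norm_integral_le_integral_norm ht0
    _ ≤ ∫ τ in (0:ℝ)..t, 10 * ε^(2-δ/2) * ((1+(t-τ))^(-(1+δ/4)) * (‖φ τ‖ * w)) := by
        apply intervalIntegral.integral_mono_on ht0 hint_f.norm hint_g
        intro τ hτ
        have hs : 0 ≤ t - τ := by linarith [hτ.2]
        have hE := aux_Ebound δ ε c S w (t-τ) hδ0 hδ1 hε hS hc hεc hs hw hw2
        have h1 : ‖(Real.exp ((-(1-(1+ε*c)^2)^2 - 4*S) * (t-τ)) * (-4*ε^4*c^3 - ε^5*c^4)) • φ τ‖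
            = (Real.exp ((-(1-(1+ε*c)^2)^2 - 4*S) * (t-τ)) * |(-4*ε^4*c^3 - ε^5*c^4)|) * ‖φ τ‖ := by
          rw [norm_smul, Real.norm_eq_abs, abs_mul, abs_of_pos (Real.exp_pos _)]
        rw [h1]
        calc (Real.exp ((-(1-(1+ε*c)^2)^2 - 4*S) * (t-τ)) * |(-4*ε^4*c^3 - ε^5*c^4)|) * ‖φ τ‖
            ≤ (10 * ε^(2-δ/2) * ((1+(t-τ))^(-(1+δ/4)) * w)) * ‖φ τ‖ :=
              mul_le_mul_of_nonneg_right hE (norm_nonneg _)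
          _ = 10 * ε^(2-δ/2) * ((1+(t-τ))^(-(1+δ/4)) * (‖φ τ‖ * w)) := by ring
    _ = 10 * ε^(2-δ/2) * ∫ τ in (0:ℝ)..t, (1+(t-τ))^(-(1+δ/4)) * (‖φ τ‖ * w) :=
        intervalIntegral.integral_const_mul _ _

/-- the critical-mode Duhamel contribution of the linear residual
term involving the low-regularity Ornstein–Uhlenbeck part `Ẑ ∈ ℓ¹_{1−δ/2}` is
`O(ε^{2−3δ/2})` on `[0, T₀/ε²]`. -/
theorem critical_linear_residual_Z (d : ℕ) (hd : 0 < d)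
    (δ T₀ CZ : ℝ) (hδ0 : 0 < δ) (hδ1 : δ < 1) (hT₀ : 0 < T₀) (hCZ : 0 < CZ) :
    ∃ C > 0, ∃ ε₀ ∈ Set.Ioc (0 : ℝ) 1, ∀ ε ∈ Set.Ioc (0 : ℝ) ε₀,
      ∀ Z : ℝ → (Fin d → ℤ) → ℂ,
        NormContOn d (1 - δ / 2) T₀ Z →
        (∀ T ∈ Set.Icc (0 : ℝ) T₀, Summable (fun K => ‖Z T K‖ * wt d (1 - δ / 2) K)) →
        (∀ T ∈ Set.Icc (0 : ℝ) T₀,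
          ∑' K : Fin d → ℤ, ‖Z T K‖ * wt d (1 - δ / 2) K ≤ CZ) →
        ∀ t ∈ Set.Icc (0 : ℝ) (T₀ / ε ^ 2),
          (∑' K : Fin d → ℤ,
            if ε * Real.sqrt (∑ i, ((K i : ℝ)) ^ 2) ≤ 1 / 10 then
              ‖∫ τ in (0 : ℝ)..t,
                (Real.exp ((-(1 - (1 + ε * (K ⟨0, hd⟩ : ℝ)) ^ 2) ^ 2
                      - 4 * ∑ i ∈ Finset.univ.filter (fun i => i ≠ (⟨0, hd⟩ : Fin d)),
                          (ε * (K i : ℝ)) ^ 2) * (t - τ))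
                    * (-4 * ε ^ 4 * (K ⟨0, hd⟩ : ℝ) ^ 3
                      - ε ^ 5 * (K ⟨0, hd⟩ : ℝ) ^ 4)) • Z (ε ^ 2 * τ) K‖
            else 0) ≤ C * ε ^ (2 - 3 * δ / 2) := by
  have hr0 : (0:ℝ) ≤ 1 - δ/2 := by linarith
  refine ⟨40*CZ/δ, by positivity, 1, ⟨zero_lt_one, le_rfl⟩, ?_⟩
  rintro ε ⟨hε0, hε1⟩ Z hZc hZs hZb t ⟨ht0, ht1⟩
  have hmap : Set.MapsTo (fun τ : ℝ => ε^2*τ) (Set.Icc 0 t) (Set.Icc 0 T₀) := by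
    intro τ hτ
    simp only [Set.mem_Icc] at hτ ⊢
    have h2 : ε^2*τ ≤ ε^2*t := mul_le_mul_of_nonneg_left hτ.2 (sq_nonneg ε)
    have h3 : ε^2*t ≤ ε^2*(T₀/ε^2) := mul_le_mul_of_nonneg_left ht1 (sq_nonneg ε)
    have h4 : ε^2*(T₀/ε^2) = T₀ := by field_simp
    exact ⟨mul_nonneg (sq_nonneg ε) hτ.1, by linarith⟩
  have hZcont : ∀ K : Fin d → ℤ, ContinuousOn (fun τ => Z (ε^2*τ) K) (Set.Icc (0:ℝ) t) :=
    fun K => (aux_contOn d (1-δ/2) T₀ hr0 Z hZc hZs K).comp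
      (Continuous.continuousOn (by fun_prop)) hmap
  -- the RHS integrand for each K
  set g : (Fin d → ℤ) → ℝ → ℝ :=
    fun K τ => (1+(t-τ))^(-(1+δ/4)) * (‖Z (ε^2*τ) K‖ * wt d (1-δ/2) K) with hg
  have hcont_rpow : ContinuousOn (fun τ : ℝ => (1+(t-τ))^(-(1+δ/4))) (Set.Icc 0 t) := by
    apply ContinuousOn.rpow_const (by fun_prop)
    intro τ hτ
    left
    intro h0
    nlinarith [hτ.2]
  have hint_g : ∀ K : Fin d → ℤ, IntervalIntegrable (g K) MeasureTheory.volume 0 t := by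
    intro K
    apply ContinuousOn.intervalIntegrable
    rw [Set.uIcc_of_le ht0]
    exact hcont_rpow.mul (((hZcont K).norm).mul continuousOn_const)
  -- finite support
  set N : ℕ := ⌈1/(10*ε)⌉₊ with hN
  set F : Finset (Fin d → ℤ) := Fintype.piFinset (fun _ => Finset.Icc (-(N:ℤ)) (N:ℤ)) with hF
  have hmem : ∀ K : Fin d → ℤ, ε * Real.sqrt (∑ i, ((K i:ℝ))^2) ≤ 1/10 → K ∈ F := by
    intro K hcond
    rw [hF, Fintype.mem_piFinset]
    intro i
    rw [Finset.mem_Icc, ← abs_le]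
    have h1 : ((K i:ℝ))^2 ≤ ∑ j, ((K j:ℝ))^2 :=
      Finset.single_le_sum (f := fun j => ((K j:ℝ))^2) (fun j _ => sq_nonneg _) (Finset.mem_univ i)
    have h2 : |(K i:ℝ)| ≤ Real.sqrt (∑ j, ((K j:ℝ))^2) := by
      rw [← Real.sqrt_sq_eq_abs]; exact Real.sqrt_le_sqrt h1
    have h3 : Real.sqrt (∑ j, ((K j:ℝ))^2) ≤ 1/(10*ε) := by
      rw [le_div_iff₀ (by positivity : (0:ℝ) < 10*ε)]
      nlinarith [hcond]
    have h4 : (1:ℝ)/(10*ε) ≤ N := Nat.le_ceil _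
    have h5 : |(K i:ℝ)| ≤ (N:ℝ) := le_trans h2 (le_trans h3 h4)
    have h6 : ((|K i| : ℤ) : ℝ) ≤ ((N:ℤ) : ℝ) := by rwa [Int.cast_abs, Int.cast_natCast]
    exact_mod_cast h6
  have hsupp : ∀ K : Fin d → ℤ, K ∉ F →
      (if ε * Real.sqrt (∑ i, ((K i : ℝ)) ^ 2) ≤ 1 / 10 then
        ‖∫ τ in (0 : ℝ)..t,
          (Real.exp ((-(1 - (1 + ε * (K ⟨0, hd⟩ : ℝ)) ^ 2) ^ 2
                - 4 * ∑ i ∈ Finset.univ.filter (fun i => i ≠ (⟨0, hd⟩ : Fin d)),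
                    (ε * (K i : ℝ)) ^ 2) * (t - τ))
              * (-4 * ε ^ 4 * (K ⟨0, hd⟩ : ℝ) ^ 3
                - ε ^ 5 * (K ⟨0, hd⟩ : ℝ) ^ 4)) • Z (ε ^ 2 * τ) K‖
      else 0) = 0 := by
    intro K hK
    exact if_neg (fun hcond => hK (hmem K hcond))
  rw [tsum_eq_sum hsupp]
  -- per-K bound
  have key : ∀ K ∈ F,
      (if ε * Real.sqrt (∑ i, ((K i : ℝ)) ^ 2) ≤ 1 / 10 then
        ‖∫ τ in (0 : ℝ)..t,
          (Real.exp ((-(1 - (1 + ε * (K ⟨0, hd⟩ : ℝ)) ^ 2) ^ 2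
                - 4 * ∑ i ∈ Finset.univ.filter (fun i => i ≠ (⟨0, hd⟩ : Fin d)),
                    (ε * (K i : ℝ)) ^ 2) * (t - τ))
              * (-4 * ε ^ 4 * (K ⟨0, hd⟩ : ℝ) ^ 3
                - ε ^ 5 * (K ⟨0, hd⟩ : ℝ) ^ 4)) • Z (ε ^ 2 * τ) K‖
      else 0) ≤ 10 * ε^(2-δ/2) * ∫ τ in (0:ℝ)..t, g K τ := by
    intro K _
    have hRHS0 : 0 ≤ 10 * ε^(2-δ/2) * ∫ τ in (0:ℝ)..t, g K τ := by
      apply mul_nonneg (by positivity)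
      apply intervalIntegral.integral_nonneg ht0
      intro τ hτ
      have h1 : (0:ℝ) ≤ 1+(t-τ) := by nlinarith [hτ.2]
      exact mul_nonneg (Real.rpow_nonneg h1 _)
        (mul_nonneg (norm_nonneg _) (aux_wt_nonneg d _ hr0 K))
    by_cases hcond : ε * Real.sqrt (∑ i, ((K i : ℝ)) ^ 2) ≤ 1 / 10
    · rw [if_pos hcond]
      have hc : (K ⟨0, hd⟩ : ℝ) = 0 ∨ 1 ≤ |(K ⟨0, hd⟩ : ℝ)| := by
        rcases eq_or_ne (K ⟨0, hd⟩) 0 with h | h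
        · left; exact_mod_cast congrArg (Int.cast : ℤ → ℝ) h
        · right
          have := Int.one_le_abs h
          have h7 : ((1:ℤ):ℝ) ≤ ((|K ⟨0, hd⟩| : ℤ) : ℝ) := by exact_mod_cast this
          rwa [Int.cast_abs, Int.cast_one] at h7
      have hεc : ε * |(K ⟨0, hd⟩ : ℝ)| ≤ 1/10 := by
        have h1 : ((K ⟨0, hd⟩:ℝ))^2 ≤ ∑ j, ((K j:ℝ))^2 :=
          Finset.single_le_sum (f := fun j => ((K j:ℝ))^2) (fun j _ => sq_nonneg _)
            (Finset.mem_univ _)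
        have h2 : |(K ⟨0, hd⟩:ℝ)| ≤ Real.sqrt (∑ j, ((K j:ℝ))^2) := by
          rw [← Real.sqrt_sq_eq_abs]; exact Real.sqrt_le_sqrt h1
        calc ε * |(K ⟨0, hd⟩:ℝ)| ≤ ε * Real.sqrt (∑ j, ((K j:ℝ))^2) :=
              mul_le_mul_of_nonneg_left h2 hε0.le
          _ ≤ 1/10 := hcond
      have hS0 : (0:ℝ) ≤ ∑ i ∈ Finset.univ.filter (fun i => i ≠ (⟨0, hd⟩ : Fin d)),
          (ε * (K i : ℝ)) ^ 2 := Finset.sum_nonneg (fun i _ => sq_nonneg _)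
      have hw2 : |(K ⟨0, hd⟩ : ℝ)| ^ (1 - δ/2) ≤ wt d (1-δ/2) K := by
        have h1 : ((K ⟨0, hd⟩:ℝ))^2 ≤ ∑ j, ((K j:ℝ))^2 :=
          Finset.single_le_sum (f := fun j => ((K j:ℝ))^2) (fun j _ => sq_nonneg _)
            (Finset.mem_univ _)
        have h2 : |(K ⟨0, hd⟩ : ℝ)| ^ ((1:ℝ) - δ/2)
            = (((K ⟨0, hd⟩:ℝ))^2) ^ ((1 - δ/2)/2) := by
          rw [← sq_abs, ← Real.rpow_natCast |(K ⟨0, hd⟩ : ℝ)| 2,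
            ← Real.rpow_mul (abs_nonneg _)]
          congr 1
          push_cast
          ring
        rw [h2]
        unfold wt
        apply Real.rpow_le_rpow (sq_nonneg _) (by linarith) (by linarith)
      exact aux_perK δ ε (K ⟨0, hd⟩ : ℝ) _ (wt d (1-δ/2) K) t (fun τ => Z (ε^2*τ) K)
        hδ0 hδ1 hε0 hS0 hc hεc ht0 (aux_one_le_wt d _ hr0 K) hw2 (hZcont K)
    · rw [if_neg hcond]
      exact hRHS0
  -- assemble
  calc (∑ K ∈ F,
      if ε * Real.sqrt (∑ i, ((K i : ℝ)) ^ 2) ≤ 1 / 10 then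
        ‖∫ τ in (0 : ℝ)..t,
          (Real.exp ((-(1 - (1 + ε * (K ⟨0, hd⟩ : ℝ)) ^ 2) ^ 2
                - 4 * ∑ i ∈ Finset.univ.filter (fun i => i ≠ (⟨0, hd⟩ : Fin d)),
                    (ε * (K i : ℝ)) ^ 2) * (t - τ))
              * (-4 * ε ^ 4 * (K ⟨0, hd⟩ : ℝ) ^ 3
                - ε ^ 5 * (K ⟨0, hd⟩ : ℝ) ^ 4)) • Z (ε ^ 2 * τ) K‖
      else 0)
      ≤ ∑ K ∈ F, 10 * ε^(2-δ/2) * ∫ τ in (0:ℝ)..t, g K τ := Finset.sum_le_sum key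
    _ = 10 * ε^(2-δ/2) * ∑ K ∈ F, ∫ τ in (0:ℝ)..t, g K τ := by rw [Finset.mul_sum]
    _ = 10 * ε^(2-δ/2) * ∫ τ in (0:ℝ)..t, ∑ K ∈ F, g K τ := by
        rw [intervalIntegral.integral_finset_sum (fun K _ => hint_g K)]
    _ ≤ 10 * ε^(2-δ/2) * ∫ τ in (0:ℝ)..t, (1+(t-τ))^(-(1+δ/4)) * CZ := by
        apply mul_le_mul_of_nonneg_left ?_ (by positivity)
        apply intervalIntegral.integral_mono_on ht0
        · have h := IntervalIntegrable.sum F (fun K (_ : K ∈ F) => hint_g K)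
          have he : (∑ i ∈ F, g i) = fun u => ∑ K ∈ F, g K u := by
            ext u; simp [Finset.sum_apply]
          rwa [he] at h
        · apply ContinuousOn.intervalIntegrable
          rw [Set.uIcc_of_le ht0]
          exact hcont_rpow.mul continuousOn_const
        · intro τ hτ
          have h1 : ∑ K ∈ F, g K τ
              = (1+(t-τ))^(-(1+δ/4)) * ∑ K ∈ F, ‖Z (ε^2*τ) K‖ * wt d (1-δ/2) K := by
            rw [Finset.mul_sum]
          rw [h1]
          have h2 : (0:ℝ) ≤ (1+(t-τ))^(-(1+δ/4)) :=
            Real.rpow_nonneg (by nlinarith [hτ.2]) _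
          apply mul_le_mul_of_nonneg_left ?_ h2
          calc ∑ K ∈ F, ‖Z (ε^2*τ) K‖ * wt d (1-δ/2) K
              ≤ ∑' K, ‖Z (ε^2*τ) K‖ * wt d (1-δ/2) K :=
                Summable.sum_le_tsum F
                  (fun b _ => mul_nonneg (norm_nonneg _) (aux_wt_nonneg d _ hr0 b))
                  (hZs _ (hmap hτ))
            _ ≤ CZ := hZb _ (hmap hτ)
    _ = 10 * ε^(2-δ/2) * ((∫ τ in (0:ℝ)..t, (1+(t-τ))^(-(1+δ/4))) * CZ) := by
        rw [intervalIntegral.integral_mul_const]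
    _ ≤ 10 * ε^(2-δ/2) * ((4/δ) * CZ) := by
        apply mul_le_mul_of_nonneg_left ?_ (by positivity)
        exact mul_le_mul_of_nonneg_right (aux_J δ t hδ0 hδ1 ht0) hCZ.le
    _ ≤ 40*CZ/δ * ε ^ (2 - 3 * δ / 2) := by
        have hεq : ε^(2-δ/2) ≤ ε^(2-3*δ/2) :=
          Real.rpow_le_rpow_of_exponent_ge hε0 hε1 (by linarith)
        have h1 : 10 * ε^(2-δ/2) * ((4/δ) * CZ) = (40*CZ/δ) * ε^(2-δ/2) := by ring
        rw [h1]
        apply mul_le_mul_of_nonneg_left ?_ (by positivity)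
        calc ε^(2-δ/2) ≤ ε^(2-3*δ/2) := hεq
          _ = ε ^ (2 - 3 * δ / 2) := by norm_num
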